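/- Let X be an inner product space over ℂ, x, y ∈ X and a, A ∈ ℂ. If Re⟨A•y − x, x − a•y⟩ ≥ 0, then 0 ≤ ‖x‖²·‖y‖² − |⟨x,y⟩|² ≤ (1/4)·|A − a|²·‖y‖⁴ − Re⟨A•y − x, x − a•y⟩·‖y‖². -/

import Mathlib

open scoped InnerProductSpace ComplexConjugate

theorem reverse_cbs_with_re {X : Type*} [NormedAddCommGroup X]
    [InnerProductSpace ℂ X] (x y : X) (a A : ℂ)
    (h : 0 ≤ (⟪x - a • y, A • y - x⟫_ℂ).re) :
    0 ≤ ‖x‖ ^ 2 * ‖y‖ ^ 2 - ‖⟪y, x⟫_ℂ‖ ^ 2 ∧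
      ‖x‖ ^ 2 * ‖y‖ ^ 2 - ‖⟪y, x⟫_ℂ‖ ^ 2 ≤
        (1 / 4) * ‖A - a‖ ^ 2 * ‖y‖ ^ 4 -
          (⟪x - a • y, A • y - x⟫_ℂ).re * ‖y‖ ^ 2 := by
  set s := ⟪x, y⟫_ℂ with hs
  have hyx : ⟪y, x⟫_ℂ = conj s := by rw [hs, inner_conj_symm]
  clear_value s
  have hxx : ⟪x, x⟫_ℂ = (‖x‖ : ℂ) ^ 2 := by rw [inner_self_eq_norm_sq_to_K]; norm_cast
  have hyy : ⟪y, y⟫_ℂ = (‖y‖ : ℂ) ^ 2 := by rw [inner_self_eq_norm_sq_to_K]; norm_cast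
  have hexp : ⟪x - a • y, A • y - x⟫_ℂ
      = A * s - (‖x‖ : ℂ) ^ 2 - conj a * A * (‖y‖ : ℂ) ^ 2 + conj a * conj s := by
    simp only [inner_sub_left, inner_sub_right, inner_smul_left, inner_smul_right,
      hxx, hyy, hyx, ← hs]
    ring
  have hre : (⟪x - a • y, A • y - x⟫_ℂ).re
      = A.re * s.re - A.im * s.im - ‖x‖ ^ 2 - (a.re * A.re + a.im * A.im) * ‖y‖ ^ 2
        + (a.re * s.re - a.im * s.im) := by
    rw [hexp]
    simp [Complex.add_re, Complex.sub_re, Complex.mul_re, Complex.conj_re, Complex.conj_im,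
      ← Complex.ofReal_pow, Complex.ofReal_re, Complex.ofReal_im]
  have habs1 : ‖⟪y, x⟫_ℂ‖ ^ 2 = s.re ^ 2 + s.im ^ 2 := by
    rw [hyx, Complex.sq_norm, Complex.normSq_apply]
    simp [Complex.conj_re, Complex.conj_im]
    ring
  have habs2 : ‖A - a‖ ^ 2 = (A.re - a.re) ^ 2 + (A.im - a.im) ^ 2 := by
    rw [Complex.sq_norm, Complex.normSq_apply]
    simp [Complex.sub_re, Complex.sub_im]
    ring
  have hcs : ‖s‖ ≤ ‖x‖ * ‖y‖ := by
    simpa [hs] using norm_inner_le_norm (𝕜 := ℂ) x y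
  have hcs2 : s.re ^ 2 + s.im ^ 2 ≤ ‖x‖ ^ 2 * ‖y‖ ^ 2 := by
    have h1 : ‖s‖ ^ 2 ≤ (‖x‖ * ‖y‖) ^ 2 := by
      apply sq_le_sq' <;> nlinarith [norm_nonneg s, norm_nonneg x, norm_nonneg y]
    rw [Complex.sq_norm, Complex.normSq_apply] at h1
    nlinarith [h1]
  constructor
  · rw [habs1]; linarith
  · rw [habs1, habs2, hre]
    nlinarith [sq_nonneg ((a.re + A.re) / 2 * ‖y‖ ^ 2 - s.re),
      sq_nonneg ((a.im + A.im) / 2 * ‖y‖ ^ 2 + s.im)]
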